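/- arXiv:2109.11694 — 2 statements merged into one kernel-verified Lean document; each statement's English description precedes it below -/
import Mathlib

section
/- Let γ : ℕ → ℝ be defined by γ_j = (log₂ j)^{−3} if j = 2^ℓ for some ℓ ∈ ℕ, ℓ ≥ 1, and γ_j = 0 otherwise. Then ∑_{j=1}^∞ γ_j^{1/2} converges, while ∑_{j=1}^∞ γ_j^2 (j log j)^3 diverges. -/
/-- Weights `γ_j = (log₂ j)^{-3}` for `j = 2^ℓ` (`ℓ ≥ 1`) and `γ_j = 0` otherwise
satisfy `∑ γ_j^{1/2} < ∞` while `∑ γ_j^2 (j log j)^3 = ∞`. -/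
theorem weights_summable_not_summable (γ : ℕ → ℝ)
    (h1 : ∀ ℓ : ℕ, 1 ≤ ℓ → γ (2 ^ ℓ) = (Real.logb 2 (2 ^ ℓ)) ^ (-(3 : ℝ)))
    (h2 : ∀ j : ℕ, (¬ ∃ ℓ : ℕ, 1 ≤ ℓ ∧ j = 2 ^ ℓ) → γ j = 0) :
    Summable (fun j : ℕ => (γ j) ^ ((1 : ℝ) / 2)) ∧
    ¬ Summable (fun j : ℕ => (γ j) ^ 2 * ((j : ℝ) * Real.log j) ^ 3) := by
  have hginj : Function.Injective (fun ℓ : ℕ => 2 ^ (ℓ + 1)) := by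
    intro a b hab
    simpa using Nat.pow_right_injective (le_refl 2) hab
  have hγval : ∀ n : ℕ, γ (2 ^ (n + 1)) = ((n : ℝ) + 1) ^ (-(3 : ℝ)) := by
    intro n
    rw [h1 (n + 1) (Nat.le_add_left 1 n)]
    have : Real.logb 2 ((2:ℝ) ^ (n+1)) = (n:ℝ) + 1 := by
      rw [Real.logb_pow, Real.logb_self_eq_one one_lt_two]
      push_cast; ring
    rw [this]
  have hzero : ∀ j : ℕ, j ∉ Set.range (fun ℓ : ℕ => 2 ^ (ℓ + 1)) → γ j = 0 := by
    intro j hj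
    apply h2
    rintro ⟨ℓ, hℓ, rfl⟩
    exact hj ⟨ℓ - 1, by simp [Nat.sub_add_cancel hℓ]⟩
  constructor
  · -- summable part
    have hzero' : ∀ j : ℕ, j ∉ Set.range (fun ℓ : ℕ => 2 ^ (ℓ + 1)) →
        (γ j) ^ ((1 : ℝ) / 2) = 0 := by
      intro j hj
      rw [hzero j hj, Real.zero_rpow (by norm_num)]
    rw [← hginj.summable_iff hzero']
    have heq : ∀ ℓ : ℕ, (γ (2 ^ (ℓ + 1))) ^ ((1:ℝ)/2) = ((ℓ:ℝ)+1) ^ (-(3:ℝ)/2) := by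
      intro ℓ
      rw [hγval ℓ, ← Real.rpow_mul (by positivity)]
      norm_num
    have hs : Summable (fun n : ℕ => ((n:ℝ)) ^ (-(3:ℝ)/2)) :=
      Real.summable_nat_rpow.mpr (by norm_num)
    have hs1 : Summable (fun ℓ : ℕ => ((ℓ:ℝ)+1) ^ (-(3:ℝ)/2)) := by
      have := (summable_nat_add_iff 1).mpr hs
      simpa [Nat.cast_add] using this
    exact hs1.congr fun ℓ => (heq ℓ).symm
  · -- not summable part
    intro hs
    have hc := hs.comp_injective hginj
    have hbound : ∀ ℓ : ℕ,
        (Real.log 2) ^ 3 ≤ ((fun j : ℕ => (γ j) ^ 2 * ((j : ℝ) * Real.log j) ^ 3) ∘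
          (fun ℓ : ℕ => 2 ^ (ℓ + 1))) ℓ := by
      intro ℓ
      simp only [Function.comp_apply]
      set x : ℝ := (ℓ : ℝ) + 1 with hxdef
      have hx1 : (1:ℝ) ≤ x := le_add_of_nonneg_left (Nat.cast_nonneg ℓ)
      have hx0 : (0:ℝ) < x := by linarith
      have hγ : γ (2 ^ (ℓ + 1)) = (x ^ 3)⁻¹ := by
        rw [hγval ℓ, Real.rpow_neg hx0.le]
        norm_num
      have hcast : ((2 ^ (ℓ + 1) : ℕ) : ℝ) = (2:ℝ) ^ (ℓ + 1) := by push_cast; ring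
      have hlog : Real.log ((2:ℝ) ^ (ℓ + 1)) = x * Real.log 2 := by
        rw [Real.log_pow]; push_cast [hxdef]; ring
      rw [hγ, hcast, hlog]
      have h2x : x ≤ (2:ℝ) ^ (ℓ + 1) := by
        calc x = ((ℓ + 1 : ℕ) : ℝ) := by push_cast [hxdef]; ring
        _ ≤ ((2 ^ (ℓ + 1) : ℕ) : ℝ) := by
              exact_mod_cast (Nat.lt_two_pow_self (n := ℓ + 1)).le
        _ = (2:ℝ) ^ (ℓ + 1) := hcast
      have hlog2 : (0:ℝ) < Real.log 2 := Real.log_pos one_lt_two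
      have key : ((x ^ 3)⁻¹) ^ 2 * ((2:ℝ) ^ (ℓ + 1) * (x * Real.log 2)) ^ 3
          = (((2:ℝ) ^ (ℓ + 1)) ^ 3 / x ^ 3) * (Real.log 2) ^ 3 := by
        field_simp
      rw [key]
      have h1le : (1:ℝ) ≤ ((2:ℝ) ^ (ℓ + 1)) ^ 3 / x ^ 3 := by
        rw [le_div_iff₀ (by positivity)]
        calc 1 * x ^ 3 = x ^ 3 := by ring
        _ ≤ ((2:ℝ) ^ (ℓ + 1)) ^ 3 := by
              exact pow_le_pow_left₀ hx0.le h2x 3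
      nlinarith [pow_pos hlog2 3]
    have hle := ge_of_tendsto' hc.tendsto_atTop_zero hbound
    have hlog2 : (0:ℝ) < Real.log 2 := Real.log_pos one_lt_two
    nlinarith [pow_pos hlog2 3]
end

section
/- Let N be prime, s ≥ 2, τ ∈ (0,1), and suppose Z_2,…,Z_s are subsets of {1,…,N−1}, each of size ⌈τ(N−1)⌉, where Z_ℓ may depend on the previously chosen components. Let 𝒵 be the set of vectors z = (1, z_2,…,z_s) obtainable by choosing z_ℓ ∈ Z_ℓ for ℓ = 2,…,s. Fix k ∈ ℤ^s with k·z possibly ≡ 0 (mod N). If not all components of k are divisible by N, then the number of z ∈ 𝒵 with k · z ≡ 0 (mod N) is at most ⌈τ(N−1)⌉^{s−2}, hence the proportion of such z in 𝒵 is at most 1/⌈τ(N−1)⌉. -/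
noncomputable def buildZ (s M : ℕ) (Z : ℕ → (ℕ → ℤ) → Finset ℤ)
    (hcard : ∀ ℓ v, (Z ℓ v).card = M) (f : ℕ → Fin M) : ℕ → ℤ
  | j =>
    if h : 1 ≤ j ∧ j ≤ s then
      (((Z j (fun i => if hi : i < j then buildZ s M Z hcard f i else 0)).orderIsoOfFin
        (hcard _ _)) (f j) : ℤ)
    else if j = 0 then 1 else 0
  decreasing_by all_goals exact hi

lemma buildZ_eq (s M : ℕ) (Z : ℕ → (ℕ → ℤ) → Finset ℤ)
    (hcard : ∀ ℓ v, (Z ℓ v).card = M) (f : ℕ → Fin M) (j : ℕ) :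
    buildZ s M Z hcard f j =
      if h : 1 ≤ j ∧ j ≤ s then
        (((Z j (fun i => if hi : i < j then buildZ s M Z hcard f i else 0)).orderIsoOfFin
          (hcard _ _)) (f j) : ℤ)
      else if j = 0 then 1 else 0 := by
  conv_lhs => rw [buildZ]

lemma idx_inj' {M : ℕ} {F G : Finset ℤ} (hF : F.card = M) (hG : G.card = M)
    (hFG : F = G) (a b : Fin M)
    (h : ((F.orderIsoOfFin hF) a : ℤ) = ((G.orderIsoOfFin hG) b : ℤ)) :
    a = b := by
  subst hFG
  exact (F.orderIsoOfFin hF).injective (Subtype.ext h)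

lemma buildZ_zero (s M : ℕ) (Z : ℕ → (ℕ → ℤ) → Finset ℤ)
    (hcard : ∀ ℓ v, (Z ℓ v).card = M) (f : ℕ → Fin M) :
    buildZ s M Z hcard f 0 = 1 := by
  rw [buildZ_eq]; simp

lemma buildZ_top (s M : ℕ) (Z : ℕ → (ℕ → ℤ) → Finset ℤ)
    (hcard : ∀ ℓ v, (Z ℓ v).card = M) (f : ℕ → Fin M) (j : ℕ) (hj : s < j) :
    buildZ s M Z hcard f j = 0 := by
  rw [buildZ_eq, dif_neg (by omega), if_neg (by omega)]

lemma buildZ_mem (s M : ℕ) (Z : ℕ → (ℕ → ℤ) → Finset ℤ)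
    (hdep : ∀ ℓ v w, (∀ i, i < ℓ → v i = w i) → Z ℓ v = Z ℓ w)
    (hcard : ∀ ℓ v, (Z ℓ v).card = M) (f : ℕ → Fin M) (j : ℕ)
    (h1 : 1 ≤ j) (h2 : j ≤ s) :
    buildZ s M Z hcard f j ∈ Z j (buildZ s M Z hcard f) := by
  have hZ : Z j (fun i => if hi : i < j then buildZ s M Z hcard f i else 0)
      = Z j (buildZ s M Z hcard f) := by
    refine hdep j _ _ fun i hi => ?_
    simp [hi]
  rw [buildZ_eq, dif_pos ⟨h1, h2⟩, ← hZ]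
  exact Finset.coe_mem _

lemma buildZ_inj (s M : ℕ) (Z : ℕ → (ℕ → ℤ) → Finset ℤ)
    (hcard : ∀ ℓ v, (Z ℓ v).card = M) (f g : ℕ → Fin M)
    (h : buildZ s M Z hcard f = buildZ s M Z hcard g)
    (j : ℕ) (h1 : 1 ≤ j) (h2 : j ≤ s) : f j = g j := by
  have htr : (fun i => if _ : i < j then buildZ s M Z hcard f i else 0)
      = (fun i => if _ : i < j then buildZ s M Z hcard g i else 0) := by
    funext i
    by_cases hi : i < j <;> simp [hi, congrFun h i]
  have hj := congrFun h j
  rw [buildZ_eq, buildZ_eq, dif_pos ⟨h1, h2⟩, dif_pos ⟨h1, h2⟩] at hj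
  exact idx_inj' _ _ (congrArg (Z j) htr) _ _ hj
lemma idx_inj {M : ℕ} {F G : Finset ℤ} (hF : F.card = M) (hG : G.card = M)
    (hFG : F = G) {x y : ℤ} (hx : x ∈ F) (hy : y ∈ G)
    (h : (F.orderIsoOfFin hF).symm ⟨x, hx⟩ = (G.orderIsoOfFin hG).symm ⟨y, hy⟩) :
    x = y := by
  subst hFG
  have := congrArg (F.orderIsoOfFin hF) h
  simp only [OrderIso.apply_symm_apply] at this
  exact congrArg Subtype.val this

lemma zvec_ext (s : ℕ) (Z : ℕ → (ℕ → ℤ) → Finset ℤ)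
    (hdep : ∀ ℓ v w, (∀ i, i < ℓ → v i = w i) → Z ℓ v = Z ℓ w)
    (z w : ℕ → ℤ)
    (hz0 : z 0 = 1) (hw0 : w 0 = 1)
    (hzt : ∀ ℓ, s < ℓ → z ℓ = 0) (hwt : ∀ ℓ, s < ℓ → w ℓ = 0)
    (hidx : ∀ j, 1 ≤ j → j ≤ s → Z j z = Z j w → z j = w j) : z = w := by
  funext j
  induction j using Nat.strong_induction_on with
  | _ j ih =>
    rcases Nat.eq_zero_or_pos j with h0 | h1
    · subst h0; rw [hz0, hw0]
    rcases le_or_gt j s with hjs | hjs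
    · exact hidx j h1 hjs (hdep j z w fun i hi => ih i hi)
    · rw [hzt j hjs, hwt j hjs]

lemma zvec_ext_skip (N s : ℕ) (hN : N.Prime) (Z : ℕ → (ℕ → ℤ) → Finset ℤ)
    (hdep : ∀ ℓ v w, (∀ i, i < ℓ → v i = w i) → Z ℓ v = Z ℓ w)
    (hsub : ∀ ℓ v, Z ℓ v ⊆ Finset.Icc (1 : ℤ) ((N : ℤ) - 1))
    (k : ℕ → ℤ) (ℓ : ℕ) (hℓ1 : 1 ≤ ℓ) (hℓs : ℓ ≤ s) (hkℓ : ¬ (N : ℤ) ∣ k ℓ)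
    (hktop : ∀ j, ℓ < j → j ≤ s → (N : ℤ) ∣ k j)
    (z w : ℕ → ℤ)
    (hz0 : z 0 = 1) (hw0 : w 0 = 1)
    (hzt : ∀ j, s < j → z j = 0) (hwt : ∀ j, s < j → w j = 0)
    (hzm : ∀ j, 1 ≤ j → j ≤ s → z j ∈ Z j z) (hwm : ∀ j, 1 ≤ j → j ≤ s → w j ∈ Z j w)
    (hzs : (∑ j ∈ Finset.range (s + 1), k j * z j) % (N : ℤ) = 0)
    (hws : (∑ j ∈ Finset.range (s + 1), k j * w j) % (N : ℤ) = 0)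
    (hidx : ∀ j, 1 ≤ j → j ≤ s → j ≠ ℓ → Z j z = Z j w → z j = w j) : z = w := by
  have hNp : Prime ((N : ℤ)) := Nat.prime_iff_prime_int.mp hN
  funext j
  induction j using Nat.strong_induction_on with
  | _ j ih =>
    rcases Nat.eq_zero_or_pos j with h0 | h1
    · subst h0; rw [hz0, hw0]
    rcases le_or_gt j s with hjs | hjs
    swap
    · rw [hzt j hjs, hwt j hjs]
    rcases eq_or_ne j ℓ with rfl | hjℓ
    swap
    · exact hidx j h1 hjs hjℓ (hdep j z w fun i hi => ih i hi)
    -- j = ℓ : use the congruence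
    have hdvd1 : (N : ℤ) ∣ ∑ i ∈ Finset.range (s + 1), k i * z i :=
      Int.dvd_of_emod_eq_zero hzs
    have hdvd2 : (N : ℤ) ∣ ∑ i ∈ Finset.range (s + 1), k i * w i :=
      Int.dvd_of_emod_eq_zero hws
    have hsum : (N : ℤ) ∣ ∑ i ∈ Finset.range (s + 1), k i * (z i - w i) := by
      have : ∑ i ∈ Finset.range (s + 1), k i * (z i - w i) =
          (∑ i ∈ Finset.range (s + 1), k i * z i) -
          (∑ i ∈ Finset.range (s + 1), k i * w i) := by
        rw [← Finset.sum_sub_distrib]; exact Finset.sum_congr rfl fun i _ => by ring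
      rw [this]; exact dvd_sub hdvd1 hdvd2
    have hmem : j ∈ Finset.range (s + 1) := Finset.mem_range.mpr (by omega)
    have herase : (N : ℤ) ∣ ∑ i ∈ (Finset.range (s + 1)).erase j, k i * (z i - w i) := by
      refine Finset.dvd_sum fun i hi => ?_
      have hi' := Finset.mem_of_mem_erase hi
      have hine : i ≠ j := Finset.ne_of_mem_erase hi
      rw [Finset.mem_range] at hi'
      rcases lt_or_gt_of_ne hine with hlt | hgt
      · rw [ih i hlt]; simp
      · exact Dvd.dvd.mul_right (hktop i hgt (by omega)) _
    have hterm : (N : ℤ) ∣ k j * (z j - w j) := by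
      have hsplit : ∑ i ∈ (Finset.range (s + 1)).erase j, k i * (z i - w i)
          + k j * (z j - w j) = ∑ i ∈ Finset.range (s + 1), k i * (z i - w i) :=
        Finset.sum_erase_add _ _ hmem
      have : k j * (z j - w j) = (∑ i ∈ Finset.range (s + 1), k i * (z i - w i))
          - ∑ i ∈ (Finset.range (s + 1)).erase j, k i * (z i - w i) := by
        omega
      rw [this]; exact dvd_sub hsum herase
    have hd : (N : ℤ) ∣ (z j - w j) := by
      rcases hNp.dvd_mul.mp hterm with h | h
      · exact absurd h hkℓ
      · exact h
    have hzb := Finset.mem_Icc.mp (hsub j z (hzm j h1 hjs))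
    have hwb := Finset.mem_Icc.mp (hsub j w (hwm j h1 hjs))
    have : z j - w j = 0 := by
      refine Int.eq_zero_of_abs_lt_dvd hd ?_
      rw [abs_lt]; omega
    omega

/-- Let `N` be prime, total dimension `s + 1 ≥ 2`, `τ ∈ (0,1)`, and for each coordinate
`ℓ ∈ {1,…,s}` let `Z ℓ` be a set of `⌈τ(N-1)⌉` candidates in `{1,…,N-1}`, possibly
depending on the previously chosen components (only on coordinates `< ℓ`).  Let `𝒵` be
the set of vectors `z` with `z 0 = 1`, `z ℓ ∈ Z ℓ z` for `1 ≤ ℓ ≤ s` (and `z ℓ = 0` for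
`ℓ > s`).  If not all components `k 0,…,k s` of `k` are divisible by `N`, then the number
of `z ∈ 𝒵` with `k · z ≡ 0 (mod N)` is at most `⌈τ(N-1)⌉^{s-1}`, hence the proportion of
such `z` in `𝒵` is at most `1/⌈τ(N-1)⌉`. -/
theorem cbc_dual_count_bound (N s : ℕ) (hN : N.Prime) (hs : 1 ≤ s)
    (τ : ℝ) (hτ : τ ∈ Set.Ioo (0 : ℝ) 1)
    (Z : ℕ → (ℕ → ℤ) → Finset ℤ)
    (hdep : ∀ ℓ v w, (∀ i, i < ℓ → v i = w i) → Z ℓ v = Z ℓ w)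
    (hsub : ∀ ℓ v, Z ℓ v ⊆ Finset.Icc (1 : ℤ) ((N : ℤ) - 1))
    (hcard : ∀ ℓ v, (Z ℓ v).card = ⌈τ * ((N : ℝ) - 1)⌉₊)
    (k : ℕ → ℤ) (hk : ¬ ∀ j ≤ s, (N : ℤ) ∣ k j) :
    ({z : ℕ → ℤ |
        (z 0 = 1 ∧ (∀ ℓ, 1 ≤ ℓ → ℓ ≤ s → z ℓ ∈ Z ℓ z) ∧ (∀ ℓ, s < ℓ → z ℓ = 0)) ∧
        (∑ j ∈ Finset.range (s + 1), k j * z j) % (N : ℤ) = 0}.ncard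
      ≤ ⌈τ * ((N : ℝ) - 1)⌉₊ ^ (s - 1)) ∧
    (({z : ℕ → ℤ |
        (z 0 = 1 ∧ (∀ ℓ, 1 ≤ ℓ → ℓ ≤ s → z ℓ ∈ Z ℓ z) ∧ (∀ ℓ, s < ℓ → z ℓ = 0)) ∧
        (∑ j ∈ Finset.range (s + 1), k j * z j) % (N : ℤ) = 0}.ncard : ℝ) /
      ({z : ℕ → ℤ |
        z 0 = 1 ∧ (∀ ℓ, 1 ≤ ℓ → ℓ ≤ s → z ℓ ∈ Z ℓ z) ∧ (∀ ℓ, s < ℓ → z ℓ = 0)}.ncard : ℝ)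
      ≤ 1 / (⌈τ * ((N : ℝ) - 1)⌉₊ : ℝ)) := by
  classical
  obtain ⟨hτ0, hτ1⟩ := hτ
  set M := ⌈τ * ((N : ℝ) - 1)⌉₊ with hMdef
  set B := {z : ℕ → ℤ |
      (z 0 = 1 ∧ (∀ ℓ, 1 ≤ ℓ → ℓ ≤ s → z ℓ ∈ Z ℓ z) ∧ (∀ ℓ, s < ℓ → z ℓ = 0)) ∧
      (∑ j ∈ Finset.range (s + 1), k j * z j) % (N : ℤ) = 0} with hBdef
  set 𝒵 := {z : ℕ → ℤ |
      z 0 = 1 ∧ (∀ ℓ, 1 ≤ ℓ → ℓ ≤ s → z ℓ ∈ Z ℓ z) ∧ (∀ ℓ, s < ℓ → z ℓ = 0)} with h𝒵def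
  have hN2 : 2 ≤ N := hN.two_le
  have hM1 : 1 ≤ M := by
    have : (0 : ℝ) < τ * ((N : ℝ) - 1) := by
      apply mul_pos hτ0
      have : (2 : ℝ) ≤ (N : ℝ) := by exact_mod_cast hN2
      linarith
    exact Nat.one_le_iff_ne_zero.mpr (Nat.ceil_pos.mpr this).ne'
  -- the largest non-divisible index
  push_neg at hk
  obtain ⟨j₀, hj₀s, hj₀⟩ := hk
  set L := Nat.findGreatest (fun j => ¬(N : ℤ) ∣ k j) s with hLdef
  have hPL : ¬(N : ℤ) ∣ k L := Nat.findGreatest_spec (P := fun j => ¬(N : ℤ) ∣ k j) hj₀s hj₀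
  have hLs : L ≤ s := Nat.findGreatest_le (P := fun j => ¬(N : ℤ) ∣ k j) s
  have htop : ∀ j, L < j → j ≤ s → (N : ℤ) ∣ k j := by
    intro j h1 h2
    by_contra h
    exact Nat.findGreatest_is_greatest (P := fun j => ¬(N : ℤ) ∣ k j) h1 h2 h
  -- finiteness of 𝒵
  have hΦinj : Function.Injective
      (fun (z : ↥𝒵) (i : Fin s) =>
        ((Z ((i : ℕ) + 1) z.1).orderIsoOfFin (hcard _ _)).symm
          ⟨z.1 ((i : ℕ) + 1), z.2.2.1 _ (by omega) (Nat.succ_le_of_lt i.isLt)⟩) := by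
    intro z w h
    apply Subtype.ext
    refine zvec_ext s Z hdep z.1 w.1 z.2.1 w.2.1 z.2.2.2 w.2.2.2 ?_
    intro j h1 h2 hZeq
    have hi : ((⟨j - 1, by omega⟩ : Fin s) : ℕ) + 1 = j := by simp; omega
    have hFG : Z (((⟨j - 1, by omega⟩ : Fin s) : ℕ) + 1) z.1
        = Z (((⟨j - 1, by omega⟩ : Fin s) : ℕ) + 1) w.1 := by rw [hi]; exact hZeq
    have h' := idx_inj _ _ hFG _ _ (congrFun h (⟨j - 1, by omega⟩ : Fin s))
    rw [hi] at h'
    exact h'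
  have h𝒵fin : 𝒵.Finite := Set.finite_coe_iff.mp (Finite.of_injective _ hΦinj)
  -- lower bound on the cardinality of 𝒵
  have hbmem : ∀ f : Fin s → Fin M,
      buildZ s M Z hcard (fun j => if h : 1 ≤ j ∧ j ≤ s then f ⟨j - 1, by omega⟩
        else f ⟨0, hs⟩) ∈ 𝒵 := by
    intro f
    exact ⟨buildZ_zero s M Z hcard _,
      fun ℓ h1 h2 => buildZ_mem s M Z hdep hcard _ ℓ h1 h2,
      fun ℓ hℓ => buildZ_top s M Z hcard _ ℓ hℓ⟩
  have hbinj : Function.Injective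
      (fun f : Fin s → Fin M =>
        (⟨buildZ s M Z hcard (fun j => if h : 1 ≤ j ∧ j ≤ s then f ⟨j - 1, by omega⟩
          else f ⟨0, hs⟩), hbmem f⟩ : ↥𝒵)) := by
    intro f g h
    have h' := congrArg Subtype.val h
    funext i
    have hc : 1 ≤ (i : ℕ) + 1 ∧ (i : ℕ) + 1 ≤ s := ⟨by omega, Nat.succ_le_of_lt i.isLt⟩
    have := buildZ_inj s M Z hcard _ _ h' ((i : ℕ) + 1) hc.1 hc.2
    rw [dif_pos hc, dif_pos hc] at this
    have hfix : (⟨(i : ℕ) + 1 - 1, by omega⟩ : Fin s) = i := by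
      apply Fin.ext; simp
    rwa [hfix] at this
  have h𝒵card : M ^ s ≤ 𝒵.ncard := by
    have : Finite ↥𝒵 := Set.finite_coe_iff.mpr h𝒵fin
    have h1 := Nat.card_le_card_of_injective _ hbinj
    have h2 : Nat.card (Fin s → Fin M) = M ^ s := by
      simp [Nat.card_eq_fintype_card]
    rw [h2, Nat.card_coe_set_eq] at h1
    exact h1
  -- Part 1: counting bound on B
  have hB𝒵 : B ⊆ 𝒵 := fun z hz => hz.1
  have hBfin : B.Finite := h𝒵fin.subset hB𝒵
  have hpart1 : B.ncard ≤ M ^ (s - 1) := by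
    rcases Nat.eq_zero_or_pos L with hL0 | hL1
    · -- B is empty since k·z ≡ k 0 ≢ 0
      have hBe : B = ∅ := by
        ext z
        rw [hBdef]
        simp only [Set.mem_setOf_eq, Set.mem_empty_iff_false, iff_false, not_and]
        rintro ⟨hz0, hzm, hzt⟩ hzs
        have hd : (N : ℤ) ∣ ∑ j ∈ Finset.range (s + 1), k j * z j :=
          Int.dvd_of_emod_eq_zero hzs
        rw [Finset.sum_range_succ'] at hd
        have h2 : (N : ℤ) ∣ ∑ i ∈ Finset.range s, k (i + 1) * z (i + 1) :=
          Finset.dvd_sum fun i _ => (htop (i + 1) (by omega)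
            (by have := Finset.mem_range.mp ‹i ∈ Finset.range s›; omega)).mul_right _
        have h3 : (N : ℤ) ∣ k 0 * z 0 := by simpa using dvd_sub hd h2
        rw [hz0, mul_one] at h3
        exact hPL (hL0 ▸ h3)
      rw [hBe]
      simp
    · -- injection skipping coordinate L
      set ψ : ℕ → ℕ := fun i => if i + 1 < L then i + 1 else i + 2 with hψdef
      have hψ : ∀ i, i < s - 1 → (1 ≤ ψ i ∧ ψ i ≤ s) ∧ ψ i ≠ L := by
        intro i hi
        rw [hψdef]
        dsimp only
        split_ifs with h
        · exact ⟨⟨by omega, by omega⟩, by omega⟩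
        · exact ⟨⟨by omega, by omega⟩, by omega⟩
      have hψsurj : ∀ j, 1 ≤ j → j ≤ s → j ≠ L → ∃ i, i < s - 1 ∧ ψ i = j := by
        intro j h1 h2 h3
        rcases lt_or_gt_of_ne h3 with hlt | hgt
        · refine ⟨j - 1, by omega, ?_⟩
          rw [hψdef]; dsimp only; rw [if_pos (by omega)]; omega
        · refine ⟨j - 2, by omega, ?_⟩
          rw [hψdef]; dsimp only; rw [if_neg (by omega)]; omega
      have hmemB : ∀ (z : ↥B) (i : Fin (s - 1)), z.1 (ψ (i : ℕ)) ∈ Z (ψ (i : ℕ)) z.1 :=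
        fun z i => z.2.1.2.1 _ (hψ (i : ℕ) i.isLt).1.1 (hψ (i : ℕ) i.isLt).1.2
      have hφinj : Function.Injective (fun (z : ↥B) (i : Fin (s - 1)) =>
          ((Z (ψ (i : ℕ)) z.1).orderIsoOfFin (hcard _ _)).symm
            ⟨z.1 (ψ (i : ℕ)), hmemB z i⟩) := by
        intro z w h
        apply Subtype.ext
        refine zvec_ext_skip N s hN Z hdep hsub k L hL1 hLs hPL htop z.1 w.1
          z.2.1.1 w.2.1.1 z.2.1.2.2 w.2.1.2.2 z.2.1.2.1 w.2.1.2.1 z.2.2 w.2.2 ?_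
        intro j h1 h2 hjL hZeq
        obtain ⟨i, his, hij⟩ := hψsurj j h1 h2 hjL
        have hc := congrFun h (⟨i, his⟩ : Fin (s - 1))
        have hFG : Z (ψ ((⟨i, his⟩ : Fin (s - 1)) : ℕ)) z.1
            = Z (ψ ((⟨i, his⟩ : Fin (s - 1)) : ℕ)) w.1 := by
          show Z (ψ i) z.1 = Z (ψ i) w.1
          rw [hij]; exact hZeq
        have h' := idx_inj _ _ hFG _ _ hc
        have h'' : z.1 (ψ i) = w.1 (ψ i) := h'
        rwa [hij] at h''
      have : Finite ↥B := Set.finite_coe_iff.mpr hBfin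
      have h1 := Nat.card_le_card_of_injective _ hφinj
      have h2 : Nat.card (Fin (s - 1) → Fin M) = M ^ (s - 1) := by
        simp [Nat.card_eq_fintype_card]
      rw [h2, Nat.card_coe_set_eq] at h1
      exact h1
  refine ⟨hpart1, ?_⟩
  -- Part 2: the proportion bound
  have hMpos : (0 : ℝ) < (M : ℝ) := by exact_mod_cast hM1
  have hMs : (0 : ℝ) < ((M ^ s : ℕ) : ℝ) := by
    exact_mod_cast Nat.one_le_pow s M hM1
  calc ((B.ncard : ℝ)) / (𝒵.ncard : ℝ)
      ≤ ((M ^ (s - 1) : ℕ) : ℝ) / ((M ^ s : ℕ) : ℝ) := by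
        apply div_le_div₀ (by positivity) (by exact_mod_cast hpart1) hMs
          (by exact_mod_cast h𝒵card)
    _ = 1 / (M : ℝ) := by
        push_cast
        have hpow : (M : ℝ) ^ s = (M : ℝ) ^ (s - 1) * (M : ℝ) := by
          rw [← pow_succ]; congr 1; omega
        rw [hpow, div_mul_eq_div_div, div_self (pow_pos hMpos (s - 1)).ne']
end
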